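/- Let p > 0 and 0 < q < 1 be real numbers. Then the function u ↦ ( (1+u)^{−p} − 1 ) u^{−q−1} is Lebesgue integrable on (0,∞) and ∫₀^∞ ( (1+u)^{−p} − 1 ) u^{−q−1} du = Γ(−q) Γ(p+q) / Γ(p). -/

import Mathlib

open MeasureTheory

open Set Real Filter Topology

-- Bernoulli-type bound
private lemma bern {p : ℝ} (hp : 0 < p) {u : ℝ} (hu : 0 ≤ u) :
    1 - p * u ≤ (1 + u) ^ (-p) := by
  have key : MonotoneOn (fun u : ℝ => p * u + (1 + u) ^ (-p)) (Ici 0) := by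
    have hder : ∀ x : ℝ, 0 < x → HasDerivAt (fun u : ℝ => p * u + (1 + u) ^ (-p))
        (p * 1 + 1 * (-p) * (1 + x) ^ (-p - 1)) x := by
      intro x hx
      exact ((hasDerivAt_id x).const_mul p).add
        (((hasDerivAt_id x).const_add 1).rpow_const (Or.inl (by positivity)))
    apply monotoneOn_of_deriv_nonneg (convex_Ici 0)
    · apply ContinuousOn.add (by fun_prop)
      exact (continuousOn_const.add continuousOn_id).rpow_const
        (fun x hx => Or.inl (by have hx' : (0:ℝ) ≤ x := hx; exact (by positivity : (0:ℝ) < 1 + x).ne'))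
    · intro x hx
      rw [interior_Ici, mem_Ioi] at hx
      exact (hder x hx).differentiableAt.differentiableWithinAt
    · intro x hx
      rw [interior_Ici, mem_Ioi] at hx
      rw [(hder x hx).deriv]
      have h1 : (1 + x) ^ (-p - 1) ≤ 1 :=
        rpow_le_one_of_one_le_of_nonpos (by linarith) (by linarith)
      nlinarith [h1]
  have h := key (self_mem_Ici (a := (0:ℝ))) hu hu
  simp only [mul_zero, zero_add, add_zero] at h
  rw [Real.one_rpow] at h
  linarith

private lemma abs_bd1 {p : ℝ} (hp : 0 < p) {u : ℝ} (hu : 0 ≤ u) :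
    |(1 + u) ^ (-p) - 1| ≤ p * u := by
  have h1 : (1 + u) ^ (-p) ≤ 1 :=
    rpow_le_one_of_one_le_of_nonpos (by linarith) (by linarith)
  have h2 := bern hp hu
  have h3 : 0 ≤ p * u := by positivity
  rw [abs_le]; constructor <;> linarith

private lemma abs_bd2 {p : ℝ} (hp : 0 < p) {u : ℝ} (hu : 0 ≤ u) :
    |(1 + u) ^ (-p) - 1| ≤ 1 := by
  have h1 : (1 + u) ^ (-p) ≤ 1 :=
    rpow_le_one_of_one_le_of_nonpos (by linarith) (by linarith)
  have h2 : 0 < (1 + u) ^ (-p) := rpow_pos_of_pos (by linarith) _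
  rw [abs_le]; constructor <;> linarith

private lemma contOn_main (p q : ℝ) :
    ContinuousOn (fun u : ℝ => ((1 + u) ^ (-p) - 1) * u ^ (-q - 1)) (Ioi 0) := by
  apply ContinuousOn.mul
  · apply ContinuousOn.sub _ continuousOn_const
    exact (continuousOn_const.add continuousOn_id).rpow_const
      (fun x hx => Or.inl (by have hx' : (0:ℝ) < x := hx; exact (by positivity : (0:ℝ) < 1 + x).ne'))
  · exact continuousOn_id.rpow_const (fun x hx => Or.inl (ne_of_gt hx))

private lemma target_integrable {p q : ℝ} (hp : 0 < p) (hq0 : 0 < q) (hq1 : q < 1) :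
    IntegrableOn (fun u : ℝ => ((1 + u) ^ (-p) - 1) * u ^ (-q - 1)) (Ioi 0) := by
  have hcont := contOn_main p q
  rw [← Ioc_union_Ioi_eq_Ioi (zero_le_one' ℝ)]
  apply IntegrableOn.union
  · -- on (0,1]: dominated by p * u^(-q)
    have hg : IntegrableOn (fun u : ℝ => p * u ^ (-q)) (Ioc 0 1) := by
      exact (intervalIntegral.intervalIntegrable_rpow' (by linarith)).1.const_mul p
    apply Integrable.mono' hg
      ((hcont.mono Ioc_subset_Ioi_self).aestronglyMeasurable measurableSet_Ioc)
    rw [ae_restrict_iff' measurableSet_Ioc]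
    refine ae_of_all _ fun u hu => ?_
    obtain ⟨hu0, hu1⟩ := hu
    rw [norm_mul, norm_eq_abs, norm_eq_abs, abs_of_nonneg (rpow_nonneg hu0.le _)]
    calc |(1 + u) ^ (-p) - 1| * u ^ (-q - 1) ≤ (p * u) * u ^ (-q - 1) := by
          apply mul_le_mul_of_nonneg_right (abs_bd1 hp hu0.le) (rpow_nonneg hu0.le _)
      _ = p * u ^ (-q) := by
          rw [mul_assoc, ← Real.rpow_one_add' hu0.le (by intro h; simp at h; linarith)]
          norm_num
  · -- on (1,∞): dominated by u^(-q-1)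
    have hg : IntegrableOn (fun u : ℝ => u ^ (-q - 1)) (Ioi 1) :=
      integrableOn_Ioi_rpow_of_lt (by linarith) one_pos
    apply Integrable.mono' hg
      ((hcont.mono (Ioi_subset_Ioi zero_le_one)).aestronglyMeasurable measurableSet_Ioi)
    rw [ae_restrict_iff' measurableSet_Ioi]
    refine ae_of_all _ fun u hu => ?_
    rw [mem_Ioi] at hu
    have hu0 : (0:ℝ) < u := lt_trans one_pos hu
    rw [norm_mul, norm_eq_abs, norm_eq_abs, abs_of_nonneg (rpow_nonneg hu0.le _)]
    calc |(1 + u) ^ (-p) - 1| * u ^ (-q - 1) ≤ 1 * u ^ (-q - 1) :=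
          mul_le_mul_of_nonneg_right (abs_bd2 hp hu0.le) (rpow_nonneg hu0.le _)
      _ = u ^ (-q - 1) := one_mul _

private lemma realBeta (a b : ℝ) (ha : 0 < a) (hb : 0 < b) :
    IntegrableOn (fun x : ℝ => x ^ (a-1) * (1-x) ^ (b-1)) (Ioo 0 1) ∧
    ∫ x in Ioo (0:ℝ) 1, x ^ (a-1) * (1-x) ^ (b-1)
      = Real.Gamma a * Real.Gamma b / Real.Gamma (a+b) := by
  set F : ℝ → ℂ := fun x => (x:ℂ) ^ ((a:ℂ)-1) * (1-(x:ℂ)) ^ ((b:ℂ)-1) with hF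
  have hFint : IntegrableOn F (Ioc 0 1) :=
    (Complex.betaIntegral_convergent (by simpa using ha) (by simpa using hb)).1
  have key : ∀ x ∈ Ioo (0:ℝ) 1, F x = ((x ^ (a-1) * (1-x) ^ (b-1) : ℝ) : ℂ) := by
    intro x hx
    obtain ⟨hx0, hx1⟩ := hx
    rw [hF]
    rw [Complex.ofReal_mul, Complex.ofReal_cpow hx0.le, Complex.ofReal_cpow (by linarith)]
    push_cast
    ring
  constructor
  · have h1 : IntegrableOn (fun x => (F x).re) (Ioo 0 1) :=
      ((hFint.mono_set Ioo_subset_Ioc_self).re)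
    apply h1.congr_fun _ measurableSet_Ioo
    intro x hx
    simp only [key x hx, Complex.ofReal_re]
  · have hbeta := Complex.Gamma_mul_Gamma_eq_betaIntegral
      (s := (a:ℂ)) (t := (b:ℂ)) (by simpa using ha) (by simpa using hb)
    have hval : Complex.betaIntegral a b
        = ((∫ x in Ioo (0:ℝ) 1, x ^ (a-1) * (1-x) ^ (b-1) : ℝ) : ℂ) := by
      rw [Complex.betaIntegral, intervalIntegral.integral_of_le zero_le_one,
        MeasureTheory.integral_Ioc_eq_integral_Ioo]
      rw [setIntegral_congr_fun measurableSet_Ioo key]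
      exact integral_ofReal
    rw [hval, ← Complex.ofReal_add, Complex.Gamma_ofReal, Complex.Gamma_ofReal,
      Complex.Gamma_ofReal, ← Complex.ofReal_mul, ← Complex.ofReal_mul] at hbeta
    have := Complex.ofReal_inj.mp hbeta
    have hG : Real.Gamma (a+b) ≠ 0 := (Real.Gamma_pos_of_pos (by linarith)).ne'
    field_simp
    linarith [this]

private lemma betaIoi (a b : ℝ) (ha : 0 < a) (hb : 0 < b) :
    IntegrableOn (fun t : ℝ => t ^ (a-1) * (1+t) ^ (-(a+b))) (Ioi 0) ∧
    ∫ t in Ioi (0:ℝ), t ^ (a-1) * (1+t) ^ (-(a+b))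
      = Real.Gamma a * Real.Gamma b / Real.Gamma (a+b) := by
  set φ : ℝ → ℝ := fun t => t / (1+t) with hφ
  set ψ : ℝ → ℝ := fun t => ((1+t)^2)⁻¹ with hψ
  set g : ℝ → ℝ := fun x => x ^ (a-1) * (1-x) ^ (b-1) with hg
  have hder : ∀ t ∈ Ioi (0:ℝ), HasDerivWithinAt φ (ψ t) (Ioi 0) t := by
    intro t ht
    rw [mem_Ioi] at ht
    have h1t : (0:ℝ) < 1 + t := by linarith
    have h := (hasDerivAt_id t).div ((hasDerivAt_id t).const_add 1) h1t.ne'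
    simp only [id_eq] at h
    have heq : (1 * (1+t) - t * 1) / (1+t)^2 = ψ t := by
      rw [hψ]; field_simp; ring
    exact (heq ▸ h).hasDerivWithinAt
  have hinj : InjOn φ (Ioi 0) := by
    intro x hx y hy h
    rw [mem_Ioi] at hx hy
    rw [hφ] at h
    field_simp at h
    linarith
  have himg : φ '' (Ioi 0) = Ioo 0 1 := by
    ext x
    constructor
    · rintro ⟨t, ht, rfl⟩
      rw [mem_Ioi] at ht
      have h1t : (0:ℝ) < 1 + t := by linarith
      exact ⟨div_pos ht h1t, (div_lt_one h1t).mpr (by linarith)⟩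
    · rintro ⟨hx0, hx1⟩
      refine ⟨x / (1-x), mem_Ioi.mpr (div_pos hx0 (by linarith)), ?_⟩
      rw [hφ]
      have h1x : (1:ℝ) - x ≠ 0 := by intro h; linarith [h]
      field_simp
      ring
  have hRB := realBeta a b ha hb
  have hcong : ∀ t ∈ Ioi (0:ℝ), |ψ t| • g (φ t) = t ^ (a-1) * (1+t) ^ (-(a+b)) := by
    intro t ht
    rw [mem_Ioi] at ht
    have h1t : (0:ℝ) < 1 + t := by linarith
    have h1 : 1 - φ t = (1+t)⁻¹ := by rw [hφ]; field_simp; ring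
    have h2 : φ t ^ (a-1) = t ^ (a-1) / (1+t) ^ (a-1) :=
      Real.div_rpow ht.le h1t.le _
    have h3 : ((1+t)⁻¹) ^ (b-1) = ((1+t) ^ (b-1))⁻¹ := Real.inv_rpow h1t.le _
    have h4 : (1+t) ^ (a+b) = (1+t)^2 * ((1+t) ^ (a-1) * (1+t) ^ (b-1)) := by
      rw [← Real.rpow_natCast (1+t) 2, ← Real.rpow_add h1t, ← Real.rpow_add h1t]
      congr 1
      push_cast; ring
    have h5 : (1+t) ^ (-(a+b)) = ((1+t) ^ (a+b))⁻¹ := Real.rpow_neg h1t.le _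
    have hA : (0:ℝ) < (1+t) ^ (a-1) := rpow_pos_of_pos h1t _
    have hB : (0:ℝ) < (1+t) ^ (b-1) := rpow_pos_of_pos h1t _
    rw [smul_eq_mul, abs_of_pos (by positivity), hg]
    simp only [h1, h2, h3, h5, h4, mul_inv, div_eq_mul_inv]
    ring
  constructor
  · have := (integrableOn_image_iff_integrableOn_abs_deriv_smul
      measurableSet_Ioi hder hinj g).mp (himg ▸ hRB.1)
    exact this.congr_fun hcong measurableSet_Ioi
  · have heq := integral_image_eq_integral_abs_deriv_smul measurableSet_Ioi hder hinj g
    rw [himg] at heq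
    rw [← setIntegral_congr_fun measurableSet_Ioi hcong, ← heq]
    exact hRB.2

/-- For `p > 0` and `0 < q < 1`, the function
`u ↦ ((1+u)^{-p} - 1) u^{-q-1}` is integrable on `(0,∞)` and
`∫₀^∞ ((1+u)^{-p} - 1) u^{-q-1} du = Γ(-q) Γ(p+q) / Γ(p)`. -/
theorem beta_type_integral (p q : ℝ) (hp : 0 < p) (hq0 : 0 < q) (hq1 : q < 1) :
    MeasureTheory.IntegrableOn
      (fun u : ℝ => ((1 + u) ^ (-p) - 1) * u ^ (-q - 1)) (Set.Ioi 0) ∧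
    ∫ u in Set.Ioi (0:ℝ), ((1 + u) ^ (-p) - 1) * u ^ (-q - 1)
      = Real.Gamma (-q) * Real.Gamma (p + q) / Real.Gamma p := by
  have hT := target_integrable hp hq0 hq1
  refine ⟨hT, ?_⟩
  -- the beta-type integral
  have hbeta := betaIoi (1-q) (p+q) (by linarith) (by linarith)
  simp only [show (1:ℝ)-q-1 = -q from by ring,
    show -((1:ℝ)-q+(p+q)) = -p-1 from by ring] at hbeta
  obtain ⟨hBint, hBval⟩ := hbeta
  -- the antiderivative
  have hG0 : ((1+(0:ℝ))^(-p) - 1) * (0:ℝ)^(-q) / (-q) = 0 := by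
    rw [Real.zero_rpow (by linarith : -q ≠ 0)]
    ring
  have hder : ∀ u ∈ Ioi (0:ℝ),
      HasDerivAt (fun u : ℝ => ((1+u)^(-p) - 1) * u^(-q) / (-q))
        (((1 + u) ^ (-p) - 1) * u ^ (-q - 1) + (p/q) * (u^(-q) * (1+u)^(-p-1))) u := by
    intro u hu
    rw [mem_Ioi] at hu
    have h1u : (0:ℝ) < 1+u := by linarith
    have h1 : HasDerivAt (fun u:ℝ => (1+u)^(-p) - 1) (1 * (-p) * (1+u)^(-p-1)) u :=
      (((hasDerivAt_id u).const_add 1).rpow_const (Or.inl h1u.ne')).sub_const 1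
    have h2 : HasDerivAt (fun u:ℝ => u^(-q)) (-q * u^(-q-1)) u :=
      Real.hasDerivAt_rpow_const (Or.inl hu.ne')
    have h3 := (h1.mul h2).div_const (-q)
    refine h3.congr_deriv ?_
    symm
    rw [eq_div_iff (neg_ne_zero.mpr hq0.ne')]
    field_simp [hq0.ne']
    ring
  have hcont : ContinuousWithinAt (fun u : ℝ => ((1+u)^(-p) - 1) * u^(-q) / (-q))
      (Ici 0) 0 := by
    rw [ContinuousWithinAt, hG0]
    apply squeeze_zero_norm' (a := fun u : ℝ => (p/q) * u^(1-q))
    · filter_upwards [self_mem_nhdsWithin] with u hu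
      rw [mem_Ici] at hu
      have e1 : u ^ ((1:ℝ)-q) = u * u^(-q) := by
        rw [show (1:ℝ)-q = 1 + -q from by ring, Real.rpow_add' hu (by linarith),
          Real.rpow_one]
      rw [norm_eq_abs, abs_div, abs_mul, abs_neg, abs_of_pos hq0,
        abs_of_nonneg (rpow_nonneg hu _)]
      calc |(1+u)^(-p) - 1| * u^(-q) / q ≤ (p * u) * u^(-q) / q := by
            gcongr
            exact abs_bd1 hp hu
        _ = (p/q) * u^(1-q) := by rw [e1]; ring
    · have c := (Real.continuousAt_rpow_const 0 (1-q)
        (Or.inr (by linarith))).continuousWithinAt (s := Ici 0)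
      have c2 : Tendsto (fun u:ℝ => u^((1:ℝ)-q)) (nhdsWithin 0 (Ici 0)) (𝓝 0) := by
        simpa [Real.zero_rpow (show (1:ℝ)-q ≠ 0 from by linarith)] using c.tendsto
      simpa using c2.const_mul (p/q)
  have hlim : Tendsto (fun u : ℝ => ((1+u)^(-p) - 1) * u^(-q) / (-q)) atTop (𝓝 0) := by
    have t1 : Tendsto (fun u:ℝ => (1+u)^(-p)) atTop (𝓝 0) := by
      have := (tendsto_rpow_neg_atTop hp).comp
        (tendsto_atTop_add_const_left atTop 1 tendsto_id)
      simpa [Function.comp_def] using this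
    have t2 : Tendsto (fun u:ℝ => u^(-q)) atTop (𝓝 0) := tendsto_rpow_neg_atTop hq0
    have := ((t1.sub_const 1).mul t2).div_const (-q)
    simpa using this
  have f'int : IntegrableOn
      (fun u : ℝ => ((1 + u) ^ (-p) - 1) * u ^ (-q - 1) + (p/q) * (u^(-q) * (1+u)^(-p-1)))
      (Ioi 0) := hT.add (hBint.const_mul (p/q))
  have hFTC := integral_Ioi_of_hasDerivAt_of_tendsto hcont hder f'int hlim
  rw [hG0, sub_zero] at hFTC
  rw [integral_add hT (hBint.const_mul (p/q)), MeasureTheory.integral_const_mul, hBval] at hFTC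
  -- Gamma algebra
  have g1 : Real.Gamma (1-q+(p+q)) = p * Real.Gamma p := by
    rw [show (1:ℝ)-q+(p+q) = p+1 from by ring, Real.Gamma_add_one hp.ne']
  have g2 : Real.Gamma (1-q) = -q * Real.Gamma (-q) := by
    rw [show (1:ℝ)-q = -q+1 from by ring, Real.Gamma_add_one (neg_ne_zero.mpr hq0.ne')]
  rw [g1, g2] at hFTC
  have hGp : Real.Gamma p ≠ 0 := (Real.Gamma_pos_of_pos hp).ne'
  have hq : q ≠ 0 := hq0.ne'
  field_simp at hFTC ⊢
  apply mul_right_cancel₀ (show q * p ≠ 0 by positivity)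
  linear_combination (q * p) * hFTC
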